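/- arXiv:2401.08597 — 3 statements merged into one kernel-verified Lean document; each statement's English description precedes it below -/
import Mathlib

section
/- For all natural numbers m and n with n ≤ m and m ≡ n (mod 2), the integral ∫₀^π (cos θ)^m · cos(nθ) dθ equals (π / 2^m) · C(m, (m−n)/2), where C(·,·) denotes the binomial coefficient. -/
open Real

private noncomputable def GH (m n : ℕ) : ℝ :=
  ∫ θ in (0:ℝ)..π, (Real.cos θ) ^ m * Real.cos (n * θ)

private lemma GH_zero (n : ℕ) : GH 0 n = if n = 0 then π else 0 := by
  rcases Nat.eq_zero_or_pos n with h | h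
  · simp [GH, h]
  · have hn : (n : ℝ) ≠ 0 := Nat.cast_ne_zero.mpr h.ne'
    have : GH 0 n = ∫ θ in (0:ℝ)..π, Real.cos (n * θ) := by
      simp [GH]
    rw [this, intervalIntegral.integral_comp_mul_left Real.cos hn]
    simp [Real.sin_nat_mul_pi, if_neg h.ne']

private lemma GH_integrable (m n : ℕ) :
    IntervalIntegrable (fun θ => (Real.cos θ) ^ m * Real.cos (n * θ))
      MeasureTheory.volume 0 π := by
  apply Continuous.intervalIntegrable
  continuity

private lemma GH_rec (m n : ℕ) :
    GH (m + 1) (n + 1) = (GH m (n + 2) + GH m n) / 2 := by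
  have key : ∀ θ : ℝ, (Real.cos θ) ^ (m + 1) * Real.cos ((n + 1 : ℕ) * θ)
      = ((Real.cos θ) ^ m * Real.cos ((n + 2 : ℕ) * θ)
        + (Real.cos θ) ^ m * Real.cos ((n : ℕ) * θ)) / 2 := by
    intro θ
    have h1 : ((n + 2 : ℕ) : ℝ) * θ = (n + 1 : ℕ) * θ + θ := by push_cast; ring
    have h2 : ((n : ℕ) : ℝ) * θ = (n + 1 : ℕ) * θ - θ := by push_cast; ring
    rw [h1, h2, Real.cos_add, Real.cos_sub]
    ring
  have : GH (m + 1) (n + 1)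
      = ∫ θ in (0:ℝ)..π, ((Real.cos θ) ^ m * Real.cos ((n + 2 : ℕ) * θ)
        + (Real.cos θ) ^ m * Real.cos ((n : ℕ) * θ)) / 2 := by
    unfold GH
    exact intervalIntegral.integral_congr fun θ _ => key θ
  rw [this]
  rw [intervalIntegral.integral_div, intervalIntegral.integral_add
    (GH_integrable m (n + 2)) (GH_integrable m n)]
  rfl

private lemma GH_step_zero (m : ℕ) : GH (m + 1) 0 = GH m 1 := by
  unfold GH
  apply intervalIntegral.integral_congr
  intro θ _
  simp [pow_succ]

private lemma GH_key : ∀ m n : ℕ,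
    GH m n = if n ≤ m ∧ m % 2 = n % 2 then π / 2 ^ m * (m.choose ((m - n) / 2)) else 0 := by
  intro m
  induction m with
  | zero =>
    intro n
    rw [GH_zero]
    rcases Nat.eq_zero_or_pos n with h | h
    · simp [h]
    · rw [if_neg h.ne', if_neg]
      rintro ⟨h1, -⟩
      omega
  | succ m ih =>
    intro n
    match n with
    | 0 =>
      rw [GH_step_zero, ih 1]
      by_cases hp : m % 2 = 1
      · obtain ⟨k, hk⟩ : ∃ k, m = 2 * k + 1 := ⟨m / 2, by omega⟩
        rw [if_pos ⟨by omega, by omega⟩, if_pos ⟨by omega, by omega⟩]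
        have h1 : (m - 1) / 2 = k := by omega
        have h2 : (m + 1 - 0) / 2 = k + 1 := by omega
        rw [h1, h2]
        have hb : (m + 1).choose (k + 1) = 2 * m.choose k := by
          subst hk
          rw [Nat.choose_succ_succ]
          have : (2 * k + 1).choose (k + 1) = (2 * k + 1).choose k := by
            have h := Nat.choose_symm (n := 2 * k + 1) (k := k + 1) (by omega)
            have e : 2 * k + 1 - (k + 1) = k := by omega
            rw [e] at h
            exact h.symm
          rw [this]
          omega
        rw [hb]
        push_cast
        rw [pow_succ]
        ring
      · rw [if_neg (by omega), if_neg (by omega)]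
    | n + 1 =>
      rw [GH_rec, ih (n + 2), ih n]
      by_cases hc : n ≤ m ∧ m % 2 = n % 2
      · obtain ⟨hnm, hp⟩ := hc
        by_cases h2 : n + 2 ≤ m
        · rw [if_pos ⟨h2, by omega⟩, if_pos ⟨hnm, hp⟩, if_pos ⟨by omega, by omega⟩]
          obtain ⟨k, hk⟩ : ∃ k, m - n = 2 * k + 2 := ⟨(m - n - 2) / 2, by omega⟩
          have e1 : (m - (n + 2)) / 2 = k := by omega
          have e2 : (m - n) / 2 = k + 1 := by omega
          have e3 : (m + 1 - (n + 1)) / 2 = k + 1 := by omega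
          rw [e1, e2, e3]
          have hb : (m + 1).choose (k + 1) = m.choose k + m.choose (k + 1) :=
            Nat.choose_succ_succ m k
          rw [hb]
          push_cast
          rw [pow_succ]
          ring
        · have hnm' : n = m := by omega
          subst hnm'
          rw [if_neg (by omega), if_pos ⟨le_refl _, rfl⟩, if_pos ⟨by omega, by omega⟩]
          simp only [Nat.sub_self, Nat.zero_div, Nat.choose_zero_right,
            Nat.add_sub_cancel]
          push_cast
          rw [pow_succ]
          ring
      · rw [if_neg (by omega), if_neg (by omega), if_neg (by omega)]
        norm_num

/-- **Corrected Gröbner–Hofreiter integral (even-parity branch on [0, π]).**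
For natural numbers `m` and `n` with `n ≤ m` and `m ≡ n (mod 2)`,
`∫₀^π (cos θ)^m · cos (n θ) dθ = (π / 2^m) · C(m, (m - n)/2)`. -/
theorem integral_cos_pow_mul_cos_of_even_parity (m n : ℕ) (hnm : n ≤ m)
    (hpar : m % 2 = n % 2) :
    ∫ θ in (0:ℝ)..π, (Real.cos θ) ^ m * Real.cos (n * θ) =
      π / 2 ^ m * (m.choose ((m - n) / 2)) := by
  have := GH_key m n
  rw [if_pos ⟨hnm, hpar⟩] at this
  exact this
end

section
/- For all natural numbers L and N with N ≤ L and L ≡ N (mod 2), and for every real number z, the following series identity holds: ∑_{M=0}^∞ C(L+2M, (L+2M−N)/2) · (−z/16)^M / (M! · Γ(L+M+3/2)) = (C(L, (L−N)/2) / Γ(L+3/2)) · ∑_{M=0}^∞ [ ((L+1)/2)_M · ((L+2)/2)_M / ( (L+3/2)_M · ((L−N)/2+1)_M · ((L+N)/2+1)_M ) ] · (−z/4)^M / M!, i.e., the series of binomial terms is a ₂F₃ hypergeometric series with parameters ((L+1)/2, L/2+1; L+3/2, (L−N)/2+1, (L+N)/2+1). -/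
open Real

/-- The Pochhammer symbol (rising factorial) `(a)_M = a(a+1)⋯(a+M-1)`. -/
noncomputable def poch (a : ℝ) (M : ℕ) : ℝ := ∏ i ∈ Finset.range M, (a + i)

lemma poch_zero (a : ℝ) : poch a 0 = 1 := rfl

lemma poch_succ (a : ℝ) (M : ℕ) : poch a (M + 1) = poch a M * (a + M) :=
  Finset.prod_range_succ _ _

lemma poch_pos {a : ℝ} (ha : 0 < a) (M : ℕ) : 0 < poch a M := by
  induction M with
  | zero => simp [poch_zero]
  | succ M ih => rw [poch_succ]; positivity

lemma gamma_poch {x : ℝ} (hx : 0 < x) (M : ℕ) :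
    Real.Gamma (x + M) = Real.Gamma x * poch x M := by
  induction M with
  | zero => simp [poch_zero]
  | succ M ih =>
      have h : x + ((M : ℝ) + 1) = (x + M) + 1 := by ring
      push_cast
      rw [h, Real.Gamma_add_one (by positivity), ih, poch_succ]
      ring

lemma fact_poch (n m : ℕ) : (((n + m).factorial : ℝ)) = (n.factorial : ℝ) * poch (n + 1) m := by
  induction m with
  | zero => simp [poch_zero]
  | succ m ih =>
      have : n + (m + 1) = (n + m) + 1 := by ring
      rw [this, Nat.factorial_succ, poch_succ]
      push_cast
      rw [ih]
      ring

lemma poch_two_mul (a : ℝ) (M : ℕ) :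
    poch a (2 * M) = 4 ^ M * poch (a / 2) M * poch ((a + 1) / 2) M := by
  induction M with
  | zero => simp [poch_zero]
  | succ M ih =>
      have h2 : 2 * (M + 1) = (2 * M + 1) + 1 := by ring
      rw [h2, poch_succ, poch_succ, poch_succ, poch_succ, ih]
      push_cast
      ring

lemma choose_id (L k M : ℕ) (hk : k ≤ L) :
    (((L + 2 * M).choose (k + M) : ℝ)) * poch ((k : ℝ) + 1) M * poch (((L - k : ℕ) : ℝ) + 1) M
      = (L.choose k : ℝ) * 4 ^ M * poch (((L : ℝ) + 1) / 2) M * poch (((L : ℝ) + 2) / 2) M := by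
  have hfk : ((k.factorial : ℝ)) ≠ 0 := by positivity
  have hflk : (((L - k).factorial : ℝ)) ≠ 0 := by positivity
  apply mul_right_cancel₀ (b := (k.factorial : ℝ) * ((L - k).factorial : ℝ)) (by positivity)
  have h1 : L.choose k * k.factorial * (L - k).factorial = L.factorial :=
    Nat.choose_mul_factorial_mul_factorial hk
  have hkM : k + M ≤ L + 2 * M := by omega
  have hsub : (L + 2 * M) - (k + M) = (L - k) + M := by omega
  have h2 : (L + 2 * M).choose (k + M) * (k + M).factorial * ((L - k) + M).factorial
      = (L + 2 * M).factorial := by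
    have := Nat.choose_mul_factorial_mul_factorial hkM
    rwa [hsub] at this
  have e2 : (((L + 2 * M).choose (k + M) : ℝ)) * ((k + M).factorial : ℝ)
      * (((L - k) + M).factorial : ℝ) = ((L + 2 * M).factorial : ℝ) := by
    exact_mod_cast congrArg (Nat.cast : ℕ → ℝ) h2
  have e1 : (L.choose k : ℝ) * (k.factorial : ℝ) * ((L - k).factorial : ℝ)
      = (L.factorial : ℝ) := by exact_mod_cast congrArg (Nat.cast : ℕ → ℝ) h1
  have fp1 := fact_poch k M
  have fp2 := fact_poch (L - k) M
  have fp3 := fact_poch L (2 * M)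
  have ptm := poch_two_mul ((L : ℝ) + 1) M
  have h21 : ((L : ℝ) + 1 + 1) / 2 = ((L : ℝ) + 2) / 2 := by ring
  have hLM : (((L + 2 * M).factorial : ℝ)) = (L.factorial : ℝ) * (4 ^ M *
      poch (((L : ℝ) + 1) / 2) M * poch (((L : ℝ) + 2) / 2) M) := by
    rw [fp3, ptm, h21]
  calc (((L + 2 * M).choose (k + M) : ℝ)) * poch ((k : ℝ) + 1) M
        * poch (((L - k : ℕ) : ℝ) + 1) M * ((k.factorial : ℝ) * ((L - k).factorial : ℝ))
      = (((L + 2 * M).choose (k + M) : ℝ)) * ((k.factorial : ℝ) * poch ((k : ℝ) + 1) M)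
        * (((L - k).factorial : ℝ) * poch (((L - k : ℕ) : ℝ) + 1) M) := by ring
    _ = (((L + 2 * M).choose (k + M) : ℝ)) * ((k + M).factorial : ℝ)
        * (((L - k) + M).factorial : ℝ) := by
          rw [fact_poch k M, fact_poch (L - k) M]
    _ = ((L + 2 * M).factorial : ℝ) := e2
    _ = (L.choose k : ℝ) * (k.factorial : ℝ) * ((L - k).factorial : ℝ) * (4 ^ M *
          poch (((L : ℝ) + 1) / 2) M * poch (((L : ℝ) + 2) / 2) M) := by
          rw [← e1] at hLM; rw [hLM]
    _ = _ := by ring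

set_option maxHeartbeats 1000000 in
/-- For `N ≤ L` with `L ≡ N (mod 2)`, the series of binomial terms equals a
`₂F₃` hypergeometric series with parameters
`((L+1)/2, L/2+1; L+3/2, (L-N)/2+1, (L+N)/2+1)` times `C(L, (L-N)/2)/Γ(L+3/2)`. -/
theorem binomial_series_eq_2F3 (L N : ℕ) (hNL : N ≤ L) (hpar : L % 2 = N % 2)
    (z : ℝ) :
    ∑' M : ℕ, (((L + 2 * M).choose ((L + 2 * M - N) / 2)) : ℝ) * (-z / 16) ^ M /
        ((M.factorial : ℝ) * Real.Gamma ((L : ℝ) + (M : ℝ) + 3 / 2)) =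
      ((L.choose ((L - N) / 2) : ℝ) / Real.Gamma ((L : ℝ) + 3 / 2)) *
        ∑' M : ℕ,
          (poch (((L : ℝ) + 1) / 2) M * poch (((L : ℝ) + 2) / 2) M /
            (poch ((L : ℝ) + 3 / 2) M * poch (((L : ℝ) - (N : ℝ)) / 2 + 1) M *
              poch (((L : ℝ) + (N : ℝ)) / 2 + 1) M)) *
          (-z / 4) ^ M / (M.factorial : ℝ) := by
  set k := (L - N) / 2 with hkdef
  have h2k : 2 * k = L - N := by omega
  have hkL : k ≤ L := by omega
  have hcast1 : ((L : ℝ) - (N : ℝ)) / 2 + 1 = (k : ℝ) + 1 := by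
    have : ((L - N : ℕ) : ℝ) = (L : ℝ) - N := by push_cast [hNL]; ring
    rw [← this, ← h2k]; push_cast; ring
  have hcast2 : ((L : ℝ) + (N : ℝ)) / 2 + 1 = ((L - k : ℕ) : ℝ) + 1 := by
    have h1 : ((L - k : ℕ) : ℝ) = (L : ℝ) - k := by push_cast [hkL]; ring
    have h2 : ((L - N : ℕ) : ℝ) = (L : ℝ) - N := by push_cast [hNL]; ring
    have h3 : 2 * (k : ℝ) = (L : ℝ) - N := by
      rw [← h2]; exact_mod_cast congrArg (Nat.cast : ℕ → ℝ) h2k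
    rw [h1]; linarith
  rw [← tsum_mul_left]
  apply tsum_congr
  intro M
  have hidx : (L + 2 * M - N) / 2 = k + M := by omega
  rw [hidx, hcast1, hcast2]
  have hGam : Real.Gamma ((L : ℝ) + (M : ℝ) + 3 / 2)
      = Real.Gamma ((L : ℝ) + 3 / 2) * poch ((L : ℝ) + 3 / 2) M := by
    have := gamma_poch (x := (L : ℝ) + 3 / 2) (by positivity) M
    rw [← this]; ring_nf
  have hG0 : Real.Gamma ((L : ℝ) + 3 / 2) ≠ 0 :=
    ne_of_gt (Real.Gamma_pos_of_pos (by positivity))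
  have hP3 : poch ((L : ℝ) + 3 / 2) M ≠ 0 := ne_of_gt (poch_pos (by positivity) M)
  have hPk : poch ((k : ℝ) + 1) M ≠ 0 := ne_of_gt (poch_pos (by positivity) M)
  have hPl : poch (((L - k : ℕ) : ℝ) + 1) M ≠ 0 := ne_of_gt (poch_pos (by positivity) M)
  have hfM : ((M.factorial : ℝ)) ≠ 0 := by positivity
  have hch := choose_id L k M hkL
  have hpow : (-z / 16) ^ M * 4 ^ M = (-z / 4) ^ M := by
    rw [← mul_pow]; ring_nf
  rw [hGam, ← hpow]
  have hR : (↑(L.choose k) : ℝ) / Real.Gamma ((L : ℝ) + 3 / 2) *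
        ((poch (((L : ℝ) + 1) / 2) M * poch (((L : ℝ) + 2) / 2) M /
            (poch ((L : ℝ) + 3 / 2) M * poch ((k : ℝ) + 1) M *
              poch (((L - k : ℕ) : ℝ) + 1) M)) *
          ((-z / 16) ^ M * 4 ^ M) / (M.factorial : ℝ)) =
      ((L.choose k : ℝ) * 4 ^ M * poch (((L : ℝ) + 1) / 2) M * poch (((L : ℝ) + 2) / 2) M) *
        (-z / 16) ^ M /
        (Real.Gamma ((L : ℝ) + 3 / 2) * (poch ((L : ℝ) + 3 / 2) M * poch ((k : ℝ) + 1) M *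
          poch (((L - k : ℕ) : ℝ) + 1) M) * (M.factorial : ℝ)) := by
    ring
  rw [hR, ← hch, div_eq_div_iff (by exact mul_ne_zero hfM (mul_ne_zero hG0 hP3))
    (mul_ne_zero (mul_ne_zero hG0 (mul_ne_zero (mul_ne_zero hP3 hPk) hPl)) hfM)]
  ring
end

section
/- For all natural numbers L and N with L ≡ N (mod 2) and every real number k, the Fourier–Legendre coefficient of the modified Bessel function, b_{LN}(k) = ((2L+1)/2) ∫_{−1}^{1} I_N(kx) P_L(x) dx, equals √π · (2L+1) · 2^{−2L−1} · k^L · ∑_{M=0}^∞ t_M, where t_M = (k²/16)^M · C(L+2M, (L+2M−N)/2) / (M! · Γ(L+M+3/2)) when L+2M ≥ N, and t_M = 0 when L+2M < N. -/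
open Real

/-- Modified Bessel function of the first kind of integer order `N`, defined by
its everywhere-convergent power series. -/
noncomputable def besselI (N : ℕ) (x : ℝ) : ℝ :=
  ∑' m : ℕ, (x / 2) ^ (2 * m + N) / ((m.factorial : ℝ) * ((m + N).factorial : ℝ))

/-- Legendre polynomial of degree `L` via Rodrigues' formula. -/
noncomputable def legendreP (L : ℕ) : Polynomial ℝ :=
  Polynomial.C (1 / ((2 : ℝ) ^ L * (L.factorial : ℝ))) *
    (⇑Polynomial.derivative)^[L] ((Polynomial.X ^ 2 - 1) ^ L)

/-- The Fourier–Legendre coefficient `b_{LN}(k)` of `I_N(k·)`. -/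
noncomputable def fourierLegendreCoeffI (L N : ℕ) (k : ℝ) : ℝ :=
  ((2 * (L : ℝ) + 1) / 2) * ∫ x in (-1:ℝ)..1, besselI N (k * x) * (legendreP L).eval x

section Aux

open Polynomial MeasureTheory

private lemma gamma_nat_add_half (M : ℕ) :
    Real.Gamma ((M : ℝ) + 1 / 2) =
      Real.sqrt π * ((2 * M).factorial : ℝ) / (4 ^ M * (M.factorial : ℝ)) := by
  induction M with
  | zero =>
    rw [show ((0 : ℕ) : ℝ) + 1 / 2 = 1 / 2 by norm_num, Real.Gamma_one_half_eq]
    simp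
  | succ n ih =>
    have h0 : ((n : ℝ) + 1 / 2) ≠ 0 := by positivity
    have h1 : ((n + 1 : ℕ) : ℝ) + 1 / 2 = ((n : ℝ) + 1 / 2) + 1 := by push_cast; ring
    rw [h1, Real.Gamma_add_one h0, ih]
    have hfac : ((2 * (n + 1)).factorial : ℝ)
        = (2 * (n : ℝ) + 2) * ((2 * (n : ℝ) + 1) * ((2 * n).factorial : ℝ)) := by
      rw [show 2 * (n + 1) = (2 * n + 1) + 1 by ring, Nat.factorial_succ, Nat.factorial_succ]
      push_cast; ring
    rw [hfac, Nat.factorial_succ]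
    have hn4 : (4 : ℝ) ^ n ≠ 0 := by positivity
    have hnf : ((n.factorial : ℝ)) ≠ 0 := by positivity
    push_cast
    rw [pow_succ]
    field_simp
    ring

private lemma deriv_dvd_step {a : ℝ} {m : ℕ} {p : ℝ[X]}
    (h : (X - C a) ^ (m + 1) ∣ p) : (X - C a) ^ m ∣ derivative p := by
  obtain ⟨q, rfl⟩ := h
  rw [derivative_mul, derivative_pow, derivative_X_sub_C, mul_one]
  refine dvd_add (Dvd.dvd.mul_right ?_ q) (Dvd.dvd.mul_right (pow_dvd_pow _ m.le_succ) _)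
  rw [Nat.add_sub_cancel]
  exact Dvd.intro_left _ rfl

private lemma iterate_deriv_dvd {a : ℝ} {p : ℝ[X]} {L : ℕ} (h : (X - C a) ^ L ∣ p) (i : ℕ) :
    (X - C a) ^ (L - i) ∣ (⇑derivative)^[i] p := by
  induction i with
  | zero => simpa using h
  | succ n ih =>
    rw [Function.iterate_succ_apply']
    rcases le_or_gt L n with h1 | h1
    · rw [Nat.sub_eq_zero_of_le (h1.trans n.le_succ), pow_zero]; exact one_dvd _
    · have e : L - n = (L - (n + 1)) + 1 := by omega
      rw [e] at ih
      exact deriv_dvd_step ih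

private lemma eval_iterate_deriv_eq_zero {a : ℝ} {L i : ℕ} (ha : a = 1 ∨ a = -1) (hi : i < L) :
    (((⇑derivative)^[i]) ((X ^ 2 - 1 : ℝ[X]) ^ L)).eval a = 0 := by
  have hdvd : (X - C a) ^ L ∣ (X ^ 2 - 1 : ℝ[X]) ^ L := by
    apply pow_dvd_pow_of_dvd
    rcases ha with rfl | rfl
    · exact ⟨X + C 1, by rw [C_1]; ring⟩
    · exact ⟨X - C 1, by rw [C_neg, C_1]; ring⟩
  obtain ⟨q, hq⟩ :=
    (dvd_pow_self (X - C a) (by omega : L - i ≠ 0)).trans (iterate_deriv_dvd hdvd i)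
  rw [hq]
  simp

private lemma poly_parts (p q : ℝ[X]) :
    ∫ x in (-1:ℝ)..1, p.eval x * (derivative q).eval x
      = p.eval 1 * q.eval 1 - p.eval (-1) * q.eval (-1)
        - ∫ x in (-1:ℝ)..1, (derivative p).eval x * q.eval x :=
  intervalIntegral.integral_mul_deriv_eq_deriv_mul
    (fun x _ => p.hasDerivAt x) (fun x _ => q.hasDerivAt x)
    ((derivative p).continuous.intervalIntegrable _ _)
    ((derivative q).continuous.intervalIntegrable _ _)

private lemma poly_parts_iter :
    ∀ (j : ℕ) (p q : ℝ[X]),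
      (∀ i < j, (((⇑derivative)^[i]) q).eval 1 = 0 ∧ (((⇑derivative)^[i]) q).eval (-1) = 0) →
      ∫ x in (-1:ℝ)..1, p.eval x * (((⇑derivative)^[j]) q).eval x
        = (-1) ^ j * ∫ x in (-1:ℝ)..1, (((⇑derivative)^[j]) p).eval x * q.eval x := by
  intro j
  induction j with
  | zero => intro p q _; simp
  | succ n ih =>
    intro p q hq
    rw [Function.iterate_succ_apply]
    rw [ih p (derivative q) (fun i hi => by
      have h := hq (i + 1) (by omega)
      rwa [Function.iterate_succ_apply] at h)]
    rw [poly_parts]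
    have h1 := (hq 0 (by omega)).1
    have h2 := (hq 0 (by omega)).2
    simp only [Function.iterate_zero_apply] at h1 h2
    rw [h1, h2, Function.iterate_succ_apply']
    ring

private lemma J_eq (L : ℕ) : ∀ M : ℕ,
    ∫ x in (-1:ℝ)..1, x ^ (2 * M) * (1 - x ^ 2) ^ L
      = Real.Gamma ((M : ℝ) + 1 / 2) * (L.factorial : ℝ)
          / Real.Gamma ((L : ℝ) + (M : ℝ) + 3 / 2) := by
  induction L with
  | zero =>
    intro M
    simp only [pow_zero, mul_one, Nat.factorial_zero, Nat.cast_one, Nat.cast_zero]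
    rw [integral_pow]
    have hodd : (-1 : ℝ) ^ (2 * M + 1) = -1 := Odd.neg_one_pow ⟨M, by ring⟩
    rw [one_pow, hodd]
    rw [show (0 : ℝ) + (M : ℝ) + 3 / 2 = ((M : ℝ) + 1 / 2) + 1 by ring,
      Real.Gamma_add_one (by positivity)]
    have hΓ : Real.Gamma ((M : ℝ) + 1 / 2) ≠ 0 := (Real.Gamma_pos_of_pos (by positivity)).ne'
    have hM : (2 * (M : ℝ) + 1) ≠ 0 := by positivity
    push_cast
    field_simp
    ring
  | succ L ih =>
    intro M
    have c1 : ∀ a b : ℕ, Continuous fun x : ℝ => x ^ a * (1 - x ^ 2) ^ b := fun a b =>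
      (continuous_pow a).mul ((continuous_const.sub (continuous_pow 2)).pow b)
    have hIi : ∀ a b : ℕ, IntervalIntegrable (fun x : ℝ => x ^ a * (1 - x ^ 2) ^ b)
        volume (-1) 1 := fun a b => (c1 a b).intervalIntegrable _ _
    have hsplit : (∫ x in (-1:ℝ)..1, x ^ (2 * M) * (1 - x ^ 2) ^ (L + 1))
        = (∫ x in (-1:ℝ)..1, x ^ (2 * M) * (1 - x ^ 2) ^ L)
          - ∫ x in (-1:ℝ)..1, x ^ (2 * (M + 1)) * (1 - x ^ 2) ^ L := by
      rw [← intervalIntegral.integral_sub (hIi _ _) (hIi _ _)]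
      apply intervalIntegral.integral_congr
      intro x _
      ring
    rw [hsplit, ih M, ih (M + 1)]
    have hΓm : Real.Gamma ((M : ℝ) + 1 / 2) ≠ 0 := (Real.Gamma_pos_of_pos (by positivity)).ne'
    have hΓ2 : Real.Gamma ((L : ℝ) + (M : ℝ) + 3 / 2) ≠ 0 :=
      (Real.Gamma_pos_of_pos (by positivity)).ne'
    have e1 : ((M + 1 : ℕ) : ℝ) + 1 / 2 = ((M : ℝ) + 1 / 2) + 1 := by push_cast; ring
    have e2 : (L : ℝ) + ((M + 1 : ℕ) : ℝ) + 3 / 2 = ((L : ℝ) + (M : ℝ) + 3 / 2) + 1 := by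
      push_cast; ring
    have e3 : ((L + 1 : ℕ) : ℝ) + (M : ℝ) + 3 / 2 = ((L : ℝ) + (M : ℝ) + 3 / 2) + 1 := by
      push_cast; ring
    rw [e1, e2, e3, Real.Gamma_add_one (by positivity), Real.Gamma_add_one (by positivity),
      Nat.factorial_succ]
    have hd : ((L : ℝ) + (M : ℝ) + 3 / 2) ≠ 0 := by positivity
    have hd2 : ((M : ℝ) + 1 / 2) ≠ 0 := by positivity
    push_cast
    field_simp
    ring

private lemma moment_aux (L n : ℕ) :
    ∫ x in (-1:ℝ)..1, x ^ n * (legendreP L).eval x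
      = (1 / ((2 : ℝ) ^ L * (L.factorial : ℝ))) * ((-1) ^ L *
          ∫ x in (-1:ℝ)..1,
            (((⇑derivative)^[L]) (X ^ n : ℝ[X])).eval x * ((X ^ 2 - 1 : ℝ[X]) ^ L).eval x) := by
  have h1 : ∀ x : ℝ, x ^ n * (legendreP L).eval x
      = (1 / ((2 : ℝ) ^ L * (L.factorial : ℝ)))
          * ((X ^ n : ℝ[X]).eval x * ((((⇑derivative)^[L]) ((X ^ 2 - 1 : ℝ[X]) ^ L)).eval x)) := by
    intro x
    simp only [legendreP, eval_mul, eval_C, eval_pow, eval_X]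
    ring
  simp_rw [h1]
  rw [intervalIntegral.integral_const_mul]
  congr 1
  exact poly_parts_iter L (X ^ n) ((X ^ 2 - 1) ^ L) (fun i hi =>
    ⟨eval_iterate_deriv_eq_zero (Or.inl rfl) hi, eval_iterate_deriv_eq_zero (Or.inr rfl) hi⟩)

private lemma moment_zero (L n : ℕ) (hn : n < L) :
    ∫ x in (-1:ℝ)..1, x ^ n * (legendreP L).eval x = 0 := by
  rw [moment_aux]
  have h : (((⇑derivative)^[L]) (X ^ n : ℝ[X])) = 0 := by
    rw [iterate_derivative_X_pow_eq_C_mul, Nat.descFactorial_eq_zero_iff_lt.2 hn]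
    simp
  rw [h]
  simp

private lemma moment_eq (L M : ℕ) :
    ∫ x in (-1:ℝ)..1, x ^ (L + 2 * M) * (legendreP L).eval x
      = Real.sqrt π * ((L + 2 * M).factorial : ℝ)
          / (2 ^ L * 4 ^ M * (M.factorial : ℝ) * Real.Gamma ((L : ℝ) + (M : ℝ) + 3 / 2)) := by
  rw [moment_aux]
  have h : (((⇑derivative)^[L]) (X ^ (L + 2 * M) : ℝ[X]))
      = C (((L + 2 * M).descFactorial L : ℝ)) * X ^ (2 * M) := by
    rw [iterate_derivative_X_pow_eq_C_mul, Nat.add_sub_cancel_left]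
  rw [h]
  have h2 : ∀ x : ℝ, (C (((L + 2 * M).descFactorial L : ℝ)) * X ^ (2 * M) : ℝ[X]).eval x
      * ((X ^ 2 - 1 : ℝ[X]) ^ L).eval x
      = ((L + 2 * M).descFactorial L : ℝ)
          * ((-1) ^ L * (x ^ (2 * M) * (1 - x ^ 2) ^ L)) := by
    intro x
    simp only [eval_mul, eval_C, eval_pow, eval_X, eval_sub, eval_one]
    rw [show (x ^ 2 - 1 : ℝ) = -(1 - x ^ 2) by ring, neg_pow]
    ring
  simp_rw [h2]
  rw [intervalIntegral.integral_const_mul, intervalIntegral.integral_const_mul, J_eq,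
    gamma_nat_add_half]
  have hd : ((2 * M).factorial : ℝ) * ((L + 2 * M).descFactorial L : ℝ)
      = ((L + 2 * M).factorial : ℝ) := by
    have h0 := Nat.factorial_mul_descFactorial (Nat.le_add_right L (2 * M))
    rw [Nat.add_sub_cancel_left] at h0
    exact_mod_cast h0
  have hΓ2 : Real.Gamma ((L : ℝ) + (M : ℝ) + 3 / 2) ≠ 0 :=
    (Real.Gamma_pos_of_pos (by positivity)).ne'
  have hne : ((2 * M).factorial : ℝ) ≠ 0 := by positivity
  have hne2 : ((M.factorial : ℝ)) ≠ 0 := by positivity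
  have hne3 : ((L.factorial : ℝ)) ≠ 0 := by positivity
  have hne4 : (2 : ℝ) ^ L ≠ 0 := by positivity
  have hne5 : (4 : ℝ) ^ M ≠ 0 := by positivity
  have hsq : ((-1 : ℝ)) ^ L * (-1) ^ L = 1 := by rw [← mul_pow]; norm_num
  have key : ∀ X : ℝ, (1 / ((2 : ℝ) ^ L * (L.factorial : ℝ)))
      * ((-1 : ℝ) ^ L * (((L + 2 * M).descFactorial L : ℝ) * ((-1 : ℝ) ^ L * X)))
      = ((L + 2 * M).descFactorial L : ℝ) * X / (2 ^ L * (L.factorial : ℝ)) := by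
    intro X
    calc (1 / ((2 : ℝ) ^ L * (L.factorial : ℝ)))
        * ((-1 : ℝ) ^ L * (((L + 2 * M).descFactorial L : ℝ) * ((-1 : ℝ) ^ L * X)))
        = ((-1 : ℝ) ^ L * (-1 : ℝ) ^ L) *
            (((L + 2 * M).descFactorial L : ℝ) * X / (2 ^ L * (L.factorial : ℝ))) := by ring
      _ = ((L + 2 * M).descFactorial L : ℝ) * X / (2 ^ L * (L.factorial : ℝ)) := by
          rw [hsq, one_mul]
  rw [key, ← hd]
  set G := Real.Gamma ((L : ℝ) + (M : ℝ) + 3 / 2) with hG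
  field_simp

private lemma term_eq (L N m M : ℕ) (hm : 2 * m + N = L + 2 * M) (k : ℝ) :
    ((2 * (L : ℝ) + 1) / 2) * ((k / 2) ^ (2 * m + N)
        / ((m.factorial : ℝ) * ((m + N).factorial : ℝ))
      * (Real.sqrt π * ((L + 2 * M).factorial : ℝ)
          / (2 ^ L * 4 ^ M * (M.factorial : ℝ) * Real.Gamma ((L : ℝ) + (M : ℝ) + 3 / 2))))
    = Real.sqrt π * (2 * (L : ℝ) + 1) * (1 / 2 ^ (2 * L + 1)) * k ^ L *
        ((k ^ 2 / 16) ^ M * (((L + 2 * M).choose ((L + 2 * M - N) / 2)) : ℝ)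
          / ((M.factorial : ℝ) * Real.Gamma ((L : ℝ) + (M : ℝ) + 3 / 2))) := by
  have hchp : (L + 2 * M - N) / 2 = m := by omega
  rw [hchp]
  have hch : (((L + 2 * M).choose m : ℝ)) * ((m.factorial : ℝ) * ((m + N).factorial : ℝ))
      = ((L + 2 * M).factorial : ℝ) := by
    rw [← Nat.cast_mul, ← Nat.cast_mul]
    norm_cast
    rw [← mul_assoc, show m + N = L + 2 * M - m by omega]
    exact Nat.choose_mul_factorial_mul_factorial (by omega)
  have hk : (k / 2) ^ (2 * m + N) = k ^ L * (k ^ 2) ^ M / (2 ^ L * 4 ^ M) := by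
    rw [hm, div_pow, pow_add, pow_mul, pow_add, pow_mul]
    norm_num
  have h16 : (16 : ℝ) ^ M = 4 ^ M * 4 ^ M := by rw [← mul_pow]; norm_num
  have h2p : (2 : ℝ) ^ (2 * L + 1) = 2 ^ L * 2 ^ L * 2 := by
    rw [pow_succ, two_mul, pow_add]
  rw [hk, div_pow, h16, h2p, ← hch]
  have hΓ2 : Real.Gamma ((L : ℝ) + (M : ℝ) + 3 / 2) ≠ 0 :=
    (Real.Gamma_pos_of_pos (by positivity)).ne'
  have h1 : ((m.factorial : ℝ)) ≠ 0 := by positivity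
  have h2 : (((m + N).factorial : ℝ)) ≠ 0 := by positivity
  have h3 : ((M.factorial : ℝ)) ≠ 0 := by positivity
  have h4 : (2 : ℝ) ^ L ≠ 0 := by positivity
  have h5 : (4 : ℝ) ^ M ≠ 0 := by positivity
  field_simp

end Aux

open MeasureTheory in
/-- For `L ≡ N (mod 2)`, the Fourier–Legendre coefficient `b_{LN}(k)` equals
`√π (2L+1) 2^{-2L-1} k^L ∑_M t_M` with
`t_M = (k²/16)^M C(L+2M, (L+2M-N)/2) / (M! Γ(L+M+3/2))` for `L + 2M ≥ N` and
`t_M = 0` otherwise. -/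
theorem fourierLegendreCoeffI_eq_series (L N : ℕ) (hpar : L % 2 = N % 2) (k : ℝ) :
    fourierLegendreCoeffI L N k =
      Real.sqrt π * (2 * (L : ℝ) + 1) * (2 : ℝ) ^ (-(2 * (L : ℤ)) - 1) * k ^ L *
        ∑' M : ℕ,
          if N ≤ L + 2 * M then
            (k ^ 2 / 16) ^ M * (((L + 2 * M).choose ((L + 2 * M - N) / 2)) : ℝ) /
              ((M.factorial : ℝ) * Real.Gamma ((L : ℝ) + (M : ℝ) + 3 / 2))
          else 0 := by
  classical
  obtain ⟨Cb, hCb⟩ := (isCompact_Icc (a := (-1:ℝ)) (b := 1)).exists_bound_of_continuousOn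
    (legendreP L).continuous.continuousOn
  have hCb0 : 0 ≤ Cb := le_trans (norm_nonneg _) (hCb 0 (by norm_num))
  set F : ℕ → ℝ → ℝ := fun m x =>
    (k * x / 2) ^ (2 * m + N) / ((m.factorial : ℝ) * ((m + N).factorial : ℝ))
      * (legendreP L).eval x with hF
  have hcont : ∀ m, Continuous (F m) := by
    intro m
    exact ((((continuous_const.mul continuous_id).div_const 2).pow _).div_const _).mul
      (legendreP L).continuous
  have hpt : ∀ x : ℝ, besselI N (k * x) * (legendreP L).eval x = ∑' m, F m x := by
    intro x
    rw [besselI, ← tsum_mul_right]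
  have hInt : ∀ m, MeasureTheory.IntegrableOn (F m) (Set.Ioc (-1:ℝ) 1) := fun m =>
    (hcont m).integrableOn_Ioc
  have hbound : ∀ m, ∀ x ∈ Set.Ioc (-1:ℝ) 1,
      ‖F m x‖ ≤ (|k| / 2) ^ (2 * m + N)
        / ((m.factorial : ℝ) * ((m + N).factorial : ℝ)) * Cb := by
    intro m x hx
    have hx1 : |x| ≤ 1 := abs_le.2 ⟨hx.1.le, hx.2⟩
    have hPb : |(legendreP L).eval x| ≤ Cb := by
      simpa using hCb x (Set.Ioc_subset_Icc_self hx)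
    have h1 : |(k * x / 2) ^ (2 * m + N)| ≤ (|k| / 2) ^ (2 * m + N) := by
      rw [abs_pow]
      apply pow_le_pow_left₀ (abs_nonneg _)
      rw [abs_div, abs_mul, abs_two]
      have h2 : |k| * |x| ≤ |k| * 1 := mul_le_mul_of_nonneg_left hx1 (abs_nonneg k)
      linarith
    have hfpos : (0:ℝ) < (m.factorial : ℝ) * ((m + N).factorial : ℝ) := by positivity
    calc ‖F m x‖ = |(k * x / 2) ^ (2 * m + N)|
          / ((m.factorial : ℝ) * ((m + N).factorial : ℝ)) * |(legendreP L).eval x| := by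
          rw [hF, Real.norm_eq_abs, abs_mul, abs_div, abs_of_pos hfpos]
      _ ≤ (|k| / 2) ^ (2 * m + N)
          / ((m.factorial : ℝ) * ((m + N).factorial : ℝ)) * Cb := by gcongr
  have hsum : Summable fun m => ∫ x in Set.Ioc (-1:ℝ) 1, ‖F m x‖ := by
    apply Summable.of_nonneg_of_le
      (fun m => MeasureTheory.integral_nonneg (fun x => norm_nonneg _))
      (fun m => ?_)
      ((Real.summable_pow_div_factorial ((|k| / 2) ^ 2)).mul_left ((|k| / 2) ^ N * Cb * 2))
    have key : ∫ x in Set.Ioc (-1:ℝ) 1, ‖F m x‖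
        ≤ ((|k| / 2) ^ (2 * m + N)
            / ((m.factorial : ℝ) * ((m + N).factorial : ℝ)) * Cb) * 2 := by
      have h := MeasureTheory.norm_setIntegral_le_of_norm_le_const (μ := volume)
        (s := Set.Ioc (-1:ℝ) 1)
        (f := fun x => ‖F m x‖)
        (by rw [Real.volume_Ioc]; exact ENNReal.ofReal_lt_top)
        (fun x hx => by rw [norm_norm]; exact hbound m x hx)
      rw [measureReal_def, Real.volume_Ioc, show (1:ℝ) - (-1) = 2 by norm_num,
        ENNReal.toReal_ofReal (by norm_num : (0:ℝ) ≤ 2)] at h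
      exact le_trans (le_abs_self _) h
    refine le_trans key ?_
    have hpow : (|k| / 2) ^ (2 * m + N) = ((|k| / 2) ^ 2) ^ m * (|k| / 2) ^ N := by
      rw [pow_add, pow_mul]
    rw [hpow]
    have hle : ((m.factorial : ℝ)) ≤ (m.factorial : ℝ) * ((m + N).factorial : ℝ) :=
      le_mul_of_one_le_right (by positivity)
        (by exact_mod_cast Nat.one_le_iff_ne_zero.2 (m + N).factorial_ne_zero)
    calc ((|k| / 2) ^ 2) ^ m * (|k| / 2) ^ N
          / ((m.factorial : ℝ) * ((m + N).factorial : ℝ)) * Cb * 2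
        ≤ ((|k| / 2) ^ 2) ^ m * (|k| / 2) ^ N / (m.factorial : ℝ) * Cb * 2 := by
          gcongr
      _ = (|k| / 2) ^ N * Cb * 2 * (((|k| / 2) ^ 2) ^ m / (m.factorial : ℝ)) := by ring
  have hswap : ∫ x in Set.Ioc (-1:ℝ) 1, ∑' m, F m x
      = ∑' m, ∫ x in Set.Ioc (-1:ℝ) 1, F m x :=
    (MeasureTheory.integral_tsum_of_summable_integral_norm hInt hsum).symm
  have hterm : ∀ m, (∫ x in (-1:ℝ)..1, F m x)
      = (k / 2) ^ (2 * m + N) / ((m.factorial : ℝ) * ((m + N).factorial : ℝ))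
          * ∫ x in (-1:ℝ)..1, x ^ (2 * m + N) * (legendreP L).eval x := by
    intro m
    rw [← intervalIntegral.integral_const_mul]
    apply intervalIntegral.integral_congr
    intro x _
    rw [hF]
    simp only []
    rw [show k * x / 2 = k / 2 * x by ring, mul_pow]
    ring
  have hb : fourierLegendreCoeffI L N k
      = ∑' m, ((2 * (L : ℝ) + 1) / 2) *
          ((k / 2) ^ (2 * m + N) / ((m.factorial : ℝ) * ((m + N).factorial : ℝ))
            * ∫ x in (-1:ℝ)..1, x ^ (2 * m + N) * (legendreP L).eval x) := by
    rw [fourierLegendreCoeffI, intervalIntegral.integral_of_le (by norm_num : (-1:ℝ) ≤ 1)]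
    simp_rw [hpt]
    rw [hswap, ← tsum_mul_left]
    apply tsum_congr
    intro m
    rw [← intervalIntegral.integral_of_le (by norm_num : (-1:ℝ) ≤ 1), hterm m]
  have hzpow : (2 : ℝ) ^ (-(2 * (L : ℤ)) - 1) = 1 / 2 ^ (2 * L + 1) := by
    rw [show (-(2 * (L : ℤ)) - 1) = -((2 * L + 1 : ℕ) : ℤ) by push_cast; ring,
      zpow_neg, zpow_natCast, one_div]
  rw [hzpow, hb, ← tsum_mul_left]
  rcases le_or_gt N L with hNL | hNL
  · -- N ≤ L : reindex the left-hand sum by m = M + c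
    set c := (L - N) / 2 with hc
    have hLc : L = N + 2 * c := by omega
    have hvan : ∀ m, m < c →
        ((2 * (L : ℝ) + 1) / 2) *
          ((k / 2) ^ (2 * m + N) / ((m.factorial : ℝ) * ((m + N).factorial : ℝ))
            * ∫ x in (-1:ℝ)..1, x ^ (2 * m + N) * (legendreP L).eval x) = 0 := by
      intro m hm
      rw [moment_zero L (2 * m + N) (by omega)]
      ring
    rw [← Function.Injective.tsum_eq (g := fun M => M + c) (add_left_injective c)
      (fun m hm => by
        rcases lt_or_ge m c with h | h
        · exact absurd (hvan m h) hm
        · exact ⟨m - c, show m - c + c = m by omega⟩)]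
    apply tsum_congr
    intro M
    try beta_reduce
    have he : 2 * (M + c) + N = L + 2 * M := by omega
    have hmom : (∫ x in (-1:ℝ)..1, x ^ (2 * (M + c) + N) * (legendreP L).eval x)
        = Real.sqrt π * ((L + 2 * M).factorial : ℝ)
            / (2 ^ L * 4 ^ M * (M.factorial : ℝ)
                * Real.Gamma ((L : ℝ) + (M : ℝ) + 3 / 2)) := by
      rw [he]; exact moment_eq L M
    rw [if_pos (by omega : N ≤ L + 2 * M), hmom, term_eq L N (M + c) M he k]
  · -- L < N : reindex the right-hand sum by M = m + c
    set c := (N - L) / 2 with hc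
    have hNc : N = L + 2 * c := by omega
    rw [← Function.Injective.tsum_eq (g := fun m => m + c) (add_left_injective c)
      (f := fun M => Real.sqrt π * (2 * (L : ℝ) + 1) * (1 / 2 ^ (2 * L + 1)) * k ^ L *
        (if N ≤ L + 2 * M then
          (k ^ 2 / 16) ^ M * (((L + 2 * M).choose ((L + 2 * M - N) / 2)) : ℝ) /
            ((M.factorial : ℝ) * Real.Gamma ((L : ℝ) + (M : ℝ) + 3 / 2))
        else 0))
      (fun M hM => by
        rcases lt_or_ge M c with h | h
        · exfalso
          apply hM
          have hcond : ¬ N ≤ L + 2 * M := by omega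
          simp [hcond]
        · exact ⟨M - c, show M - c + c = M by omega⟩)]
    apply tsum_congr
    intro m
    try beta_reduce
    have he : 2 * m + N = L + 2 * (m + c) := by omega
    have hmom : (∫ x in (-1:ℝ)..1, x ^ (2 * m + N) * (legendreP L).eval x)
        = Real.sqrt π * ((L + 2 * (m + c)).factorial : ℝ)
            / (2 ^ L * 4 ^ (m + c) * ((m + c).factorial : ℝ)
                * Real.Gamma ((L : ℝ) + ((m + c : ℕ) : ℝ) + 3 / 2)) := by
      rw [he]; exact moment_eq L (m + c)
    rw [if_pos (by omega : N ≤ L + 2 * (m + c)), hmom, term_eq L N m (m + c) he k]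
end
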